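/- Suppose f satisfies (a), (b), (d) (the condition f(0) = 0 is not assumed). Then |f'(b)| ≥ (1 − |f(0)|)/(1 + |f(0)|), and the inequality is strict unless f is a holomorphic automorphism of the unit disk. -/

import Mathlib

open Complex Filter
open Metric Set

noncomputable def mob (c z : ℂ) : ℂ := (c - z) / (1 - (starRingEnd ℂ) c * z)

lemma mob_denom {c z : ℂ} (hc : ‖c‖ < 1) (hz : ‖z‖ < 1) :
    (1 : ℂ) - (starRingEnd ℂ) c * z ≠ 0 := by
  intro h
  have h1 : (1 : ℂ) = (starRingEnd ℂ) c * z := by linear_combination h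
  have : ‖(starRingEnd ℂ) c * z‖ < 1 := by
    rw [norm_mul, Complex.norm_conj]
    nlinarith [norm_nonneg c, norm_nonneg z]
  rw [← h1] at this
  simp at this

lemma mob_sq {c z : ℂ} (hne : (1 : ℂ) - (starRingEnd ℂ) c * z ≠ 0) :
    1 - (‖mob c z‖)^2 =
      (1 - (‖c‖)^2) * (1 - (‖z‖)^2)
        / (‖1 - (starRingEnd ℂ) c * z‖)^2 := by
  have h2 : Complex.normSq (1 - (starRingEnd ℂ) c * z) ≠ 0 :=
    (Complex.normSq_pos.2 hne).ne'
  rw [mob, norm_div, div_pow]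
  rw [Complex.sq_norm, Complex.sq_norm, Complex.sq_norm, Complex.sq_norm]
  rw [one_sub_div h2, div_left_inj' h2]
  simp only [Complex.normSq_apply, Complex.sub_re, Complex.sub_im, Complex.mul_re,
    Complex.mul_im, Complex.conj_re, Complex.conj_im, Complex.one_re, Complex.one_im]
  ring

lemma mob_abs_lt {c z : ℂ} (hc : ‖c‖ < 1) (hz : ‖z‖ < 1) :
    ‖mob c z‖ < 1 := by
  have h := mob_sq (mob_denom hc hz)
  have hpos : 0 < ‖1 - (starRingEnd ℂ) c * z‖ := by
    simpa [norm_pos_iff] using mob_denom hc hz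
  have h1 : 0 < (1 - (‖c‖)^2) * (1 - (‖z‖)^2)
      / (‖1 - (starRingEnd ℂ) c * z‖)^2 := by
    apply div_pos
    · apply mul_pos <;> nlinarith [norm_nonneg c, norm_nonneg z]
    · positivity
  nlinarith [norm_nonneg (mob c z)]

lemma mob_invol {c z : ℂ} (hc : ‖c‖ < 1) (hz : ‖z‖ < 1) :
    mob c (mob c z) = z := by
  have h1 := mob_denom hc hz
  have h2 := mob_denom hc (mob_abs_lt hc hz)
  have hcc : (1 : ℂ) - (starRingEnd ℂ) c * c ≠ 0 := mob_denom hc hc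
  have h2' : (1:ℂ) - (starRingEnd ℂ) c * ((c - z)/(1 - (starRingEnd ℂ) c * z)) ≠ 0 := by
    simpa [mob] using h2
  simp only [mob]
  rw [div_eq_iff h2', sub_div' h1, mul_div_assoc', one_sub_div h1, mul_div_assoc', div_left_inj' h1]
  ring

lemma mob_zero (c : ℂ) : mob c c = 0 := by simp [mob]

lemma mob_at_zero (c : ℂ) : mob c 0 = c := by simp [mob]

lemma mob_diffOn {c : ℂ} (hc : ‖c‖ < 1) :
    DifferentiableOn ℂ (mob c) (ball (0:ℂ) 1) := by
  apply DifferentiableOn.div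
  · exact (differentiable_const c).differentiableOn.sub differentiable_id.differentiableOn
  · exact (differentiable_const (1:ℂ)).differentiableOn.sub
      ((differentiable_const _).mul differentiable_id).differentiableOn
  · intro z hz
    exact mob_denom hc (by simpa [mem_ball_zero_iff] using hz)

lemma mob_mapsTo {c : ℂ} (hc : ‖c‖ < 1) :
    MapsTo (mob c) (ball (0:ℂ) 1) (ball (0:ℂ) 1) := fun z hz => by
  rw [mem_ball_zero_iff] at hz ⊢
  exact mob_abs_lt hc hz

lemma mob_bijOn {c : ℂ} (hc : ‖c‖ < 1) :
    BijOn (mob c) (ball (0:ℂ) 1) (ball (0:ℂ) 1) := by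
  refine Set.InvOn.bijOn ?_ (mob_mapsTo hc) (mob_mapsTo hc)
  constructor <;> intro z hz <;>
    exact mob_invol hc (by simpa [mem_ball_zero_iff] using hz)

lemma mono_aux {a t q : ℝ} (ha0 : 0 ≤ a) (ht : 0 ≤ t) (htq : t ≤ q)
    (hq : q ≤ 1) : (1 - q^2)*(1 + a*t)^2 ≤ (1 - t^2)*(1 + a*q)^2 := by
  nlinarith [mul_nonneg (mul_nonneg ha0 ht) (sub_nonneg.2 htq),
    mul_nonneg (mul_nonneg ha0 (mul_nonneg ha0 ht)) (mul_nonneg (le_trans ht htq) (sub_nonneg.2 htq)),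
    sq_nonneg (q - t), mul_nonneg ha0 (sub_nonneg.2 htq),
    mul_nonneg (mul_nonneg ha0 ha0) (mul_nonneg (mul_nonneg ht (ht.trans htq)) (sub_nonneg.2 htq))]

lemma zr_tendsto {b : ℂ} (hbmod : ‖b‖ = 1) :
    Tendsto (fun r:ℝ => (r:ℂ)*b) (nhdsWithin (1:ℝ) (Set.Iio 1))
      (nhdsWithin b {z : ℂ | ‖z‖ < 1}) := by
  rw [tendsto_nhdsWithin_iff]
  constructor
  · have h1 : Tendsto (fun r:ℝ => (r:ℂ)*b) (nhds 1) (nhds ((1:ℂ)*b)) :=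
      (Complex.continuous_ofReal.mul continuous_const).tendsto 1
    rw [one_mul] at h1
    exact h1.mono_left nhdsWithin_le_nhds
  · filter_upwards [Ioo_mem_nhdsLT_of_mem (by norm_num : (1:ℝ) ∈ Set.Ioc (1/2) 1)] with r hr
    have : ‖(r:ℂ)*b‖ = |r| := by
      rw [norm_mul, Complex.norm_real, Real.norm_eq_abs, hbmod, mul_one]
    simp only [Set.mem_setOf_eq, this, abs_of_pos (by linarith [hr.1] : (0:ℝ) < r)]
    exact hr.2

lemma aux_lb (f : ℂ → ℂ) (b fb' : ℂ)
    (hbmod : ‖b‖ = 1) (hfb : ‖f b‖ = 1)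
    (hderiv : Tendsto (fun z => (f z - f b) / (z - b))
      (nhdsWithin b {z : ℂ | ‖z‖ < 1}) (nhds fb'))
    (φ : ℝ → ℝ) (L : ℝ)
    (hφ : ∀ᶠ r in nhdsWithin (1:ℝ) (Set.Iio 1),
      φ r ≤ (1 - ‖f ((r:ℂ)*b)‖)/(1-r))
    (hLim : Tendsto φ (nhdsWithin (1:ℝ) (Set.Iio 1)) (nhds L)) :
    L ≤ ‖fb'‖ := by
  have hIoo : Set.Ioo (1/2 : ℝ) 1 ∈ nhdsWithin (1:ℝ) (Set.Iio 1) :=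
    Ioo_mem_nhdsLT_of_mem (by norm_num)
  have hG : Tendsto (fun r:ℝ => ‖(f ((r:ℂ)*b) - f b)/((r:ℂ)*b - b)‖)
      (nhdsWithin (1:ℝ) (Set.Iio 1)) (nhds (‖fb'‖)) :=
    (continuous_norm.tendsto fb').comp (hderiv.comp (zr_tendsto hbmod))
  refine le_of_tendsto_of_tendsto hLim hG ?_
  filter_upwards [hφ, hIoo] with r h1 hr
  have hrb : ‖(r:ℂ)*b - b‖ = 1 - r := by
    have : (r:ℂ)*b - b = ((r - 1 : ℝ):ℂ)*b := by push_cast; ring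
    rw [this, norm_mul, Complex.norm_real, Real.norm_eq_abs, hbmod, mul_one,
      abs_of_neg (by linarith [hr.2] : r - 1 < 0)]
    ring
  have h1r : (0:ℝ) < 1 - r := by linarith [hr.2]
  have hnum : 1 - ‖f ((r:ℂ)*b)‖ ≤ ‖f ((r:ℂ)*b) - f b‖ := by
    have h3 : ‖f b‖ ≤ ‖f b - f ((r:ℂ)*b)‖ + ‖f ((r:ℂ)*b)‖ := by
      simpa using norm_add_le (f b - f ((r:ℂ)*b)) (f ((r:ℂ)*b))
    rw [norm_sub_rev] at h3
    linarith [hfb ▸ h3]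
  calc φ r ≤ (1 - ‖f ((r:ℂ)*b)‖)/(1-r) := h1
    _ ≤ ‖(f ((r:ℂ)*b) - f b)/((r:ℂ)*b - b)‖ := by
        rw [norm_div, hrb]
        exact (div_le_div_iff_of_pos_right h1r).mpr hnum


set_option maxHeartbeats 1000000 in
/-- If `f` satisfies (a), (b), (d) (not assuming `f 0 = 0`), then
`|f'(b)| ≥ (1 - |f 0|) / (1 + |f 0|)`, with strict inequality unless `f` is a
holomorphic automorphism of the unit disk (i.e., maps the disk bijectively onto itself). -/
theorem general_boundary_corollary
    (f : ℂ → ℂ) (b fb' : ℂ)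
    (ha : DifferentiableOn ℂ f {z : ℂ | ‖z‖ < 1})
    (hb : ∀ z : ℂ, ‖z‖ < 1 → ‖f z‖ < 1)
    (hbmod : ‖b‖ = 1)
    (hcont : ContinuousWithinAt f ({z : ℂ | ‖z‖ < 1} ∪ {b}) b)
    (hfb : ‖f b‖ = 1)
    (hderiv : Tendsto (fun z => (f z - f b) / (z - b))
      (nhdsWithin b {z : ℂ | ‖z‖ < 1}) (nhds fb')) :
    (1 - ‖f 0‖) / (1 + ‖f 0‖) ≤ ‖fb'‖ ∧
      (¬ Set.BijOn f {z : ℂ | ‖z‖ < 1} {z : ℂ | ‖z‖ < 1} →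
        (1 - ‖f 0‖) / (1 + ‖f 0‖) < ‖fb'‖) := by
  have hmem : ∀ z : ℂ, z ∈ ball (0:ℂ) 1 ↔ ‖z‖ < 1 := fun z => by
    simp [mem_ball_zero_iff]
  have hDball : {z : ℂ | ‖z‖ < 1} = ball (0:ℂ) 1 := by
    ext z; simp [hmem z]
  set a := ‖f 0‖ with ha_def
  have ha1 : a < 1 := hb 0 (by simp)
  have ha0 : 0 ≤ a := norm_nonneg _
  have hc0 : ‖f 0‖ < 1 := ha1
  set g : ℂ → ℂ := fun z => mob (f 0) (f z) with hg_def
  have hg0 : g 0 = 0 := by simp [hg_def, mob_zero]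
  have hfd : DifferentiableOn ℂ f (ball (0:ℂ) 1) := hDball ▸ ha
  have hfmaps : MapsTo f (ball (0:ℂ) 1) (ball (0:ℂ) 1) := fun z hz =>
    (hmem _).2 (hb z ((hmem _).1 hz))
  have hgd : DifferentiableOn ℂ g (ball (0:ℂ) 1) := by
    have := (mob_diffOn hc0).comp hfd hfmaps
    exact this
  have hgmaps : MapsTo g (ball (0:ℂ) 1) (ball (0:ℂ) 1) := fun z hz =>
    (hmem _).2 (mob_abs_lt hc0 (hb z ((hmem _).1 hz)))
  have hgs : ∀ z : ℂ, ‖z‖ < 1 → ‖g z‖ ≤ ‖z‖ := fun z hz =>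
    Complex.norm_le_norm_of_mapsTo_ball hgd (hgmaps.mono_right ball_subset_closedBall) hg0 hz
  -- cleared-form key inequality
  have key : ∀ z : ℂ, ‖z‖ < 1 →
      (1 - a^2) * (1 - (‖g z‖)^2) ≤ (1 - (‖f z‖)^2) * (1+a)^2 := by
    intro z hz
    have hfz := hb z hz
    have hgz : ‖g z‖ < 1 := mob_abs_lt hc0 hfz
    have hne := mob_denom hc0 hgz
    have hmsq := mob_sq hne
    have hinv : mob (f 0) (g z) = f z := mob_invol hc0 hfz
    rw [hinv] at hmsq
    set A1 := ‖1 - (starRingEnd ℂ) (f 0) * g z‖ with hA1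
    have hA1pos : 0 < A1 := by simpa [hA1, norm_pos_iff] using hne
    have hA1le : A1 ≤ 1 + a := by
      have hstep : A1 ≤ 1 + ‖(starRingEnd ℂ) (f 0) * g z‖ := by
        simpa [hA1] using
          norm_sub_le (1:ℂ) ((starRingEnd ℂ) (f 0) * g z)
      have hmul : ‖(starRingEnd ℂ) (f 0) * g z‖ ≤ a := by
        rw [norm_mul, Complex.norm_conj]
        have := norm_nonneg (g z)
        nlinarith [hgz.le]
      linarith
    have e1 : (1 - (‖f z‖)^2) * A1^2 = (1-a^2)*(1-(‖g z‖)^2) := by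
      rw [hmsq, ← ha_def]; field_simp
    have h1 : (1 - (‖f z‖)^2) ≥ 0 := by nlinarith [norm_nonneg (f z), hfz.le]
    nlinarith [mul_le_mul_of_nonneg_left (mul_le_mul hA1le hA1le hA1pos.le (by linarith)) h1]
  have htt : Tendsto (fun r:ℝ => ‖f ((r:ℂ)*b)‖)
      (nhdsWithin (1:ℝ) (Set.Iio 1)) (nhds 1) := by
    have h1 : Tendsto f (nhdsWithin b {z : ℂ | ‖z‖ < 1}) (nhds (f b)) :=
      hcont.mono_left (nhdsWithin_mono b Set.subset_union_left)
    have h2 := (continuous_norm.tendsto (f b)).comp (h1.comp (zr_tendsto hbmod))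
    rwa [hfb] at h2
  have hr1 : Tendsto (fun r:ℝ => r) (nhdsWithin (1:ℝ) (Set.Iio 1)) (nhds 1) :=
    tendsto_id.mono_left nhdsWithin_le_nhds
  have h1a : (0:ℝ) < 1 + a := by linarith
  have weak : (1 - a)/(1 + a) ≤ ‖fb'‖ := by
    apply aux_lb f b fb' hbmod hfb hderiv
      (fun r => (1-a^2)*(1+r)/((1+a)^2*(1+‖f ((r:ℂ)*b)‖)))
    · filter_upwards [Ioo_mem_nhdsLT_of_mem (by norm_num : (1:ℝ) ∈ Set.Ioc (1/2) 1)] with r hr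
      have hrabs : ‖(r:ℂ)*b‖ = r := by
        rw [norm_mul, Complex.norm_real, Real.norm_eq_abs, hbmod, mul_one,
          abs_of_pos (by linarith [hr.1] : (0:ℝ) < r)]
      have hzr : ‖(r:ℂ)*b‖ < 1 := by rw [hrabs]; exact hr.2
      set t := ‖f ((r:ℂ)*b)‖ with ht_def
      have ht1 : t < 1 := hb _ hzr
      have ht0 : 0 ≤ t := norm_nonneg _
      have hkey := key _ hzr
      set G := ‖g ((r:ℂ)*b)‖ with hG_def
      have hgle : G ≤ r := by
        have h5 := hgs _ hzr; rwa [hrabs] at h5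
      have hg0' : 0 ≤ G := norm_nonneg _
      have hcl : (1-a^2)*(1-r^2) ≤ (1-t^2)*(1+a)^2 := by
        have hG2 : G^2 ≤ r^2 := pow_le_pow_left₀ hg0' hgle 2
        have hm := mul_le_mul_of_nonneg_left
          (by linarith only [hG2] : (1:ℝ)-r^2 ≤ 1 - G^2)
          (by nlinarith only [ha0, ha1] : (0:ℝ) ≤ 1-a^2)
        linarith only [hm, hkey]
      rw [div_le_div_iff₀ (by positivity) (by linarith [hr.2] : (0:ℝ) < 1 - r)]
      linarith only [hcl]
    · have hnum : Tendsto (fun r:ℝ => (1-a^2)*(1+r)) (nhdsWithin (1:ℝ) (Set.Iio 1))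
          (nhds ((1-a^2)*(1+1))) := tendsto_const_nhds.mul (tendsto_const_nhds.add hr1)
      have hden : Tendsto (fun r:ℝ => (1+a)^2*(1+‖f ((r:ℂ)*b)‖))
          (nhdsWithin (1:ℝ) (Set.Iio 1)) (nhds ((1+a)^2*(1+1))) :=
        tendsto_const_nhds.mul (tendsto_const_nhds.add htt)
      have hne0 : ((1+a)^2*(1+1) : ℝ) ≠ 0 := by positivity
      have heq : (1-a)/(1+a) = (1-a^2)*(1+1)/((1+a)^2*(1+1)) := by
        field_simp; ring
      rw [heq]
      exact hnum.div hden hne0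
  refine ⟨weak, fun hnb => ?_⟩
  have hw0 : ‖b/2‖ < 1 := by
    rw [norm_div, hbmod, Complex.norm_two]; norm_num
  have hw0' : ‖b/2‖ = 1/2 := by rw [norm_div, hbmod, Complex.norm_two]
  set u := g (b/2) with hu_def
  set s' := ‖u‖ with hs_def
  have hs_le : s' ≤ 1/2 := by
    have h5 := hgs _ hw0; rwa [hw0'] at h5
  have hu1 : ‖u‖ < 1 := by rw [← hs_def] at *; linarith
  have hs0 : 0 ≤ s' := norm_nonneg _
  have hs' : s' < 1/2 := by
    rcases lt_or_eq_of_le hs_le with h | h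
    · exact h
    · exfalso; apply hnb
      have hb0 : b ≠ 0 := by
        intro h0; rw [h0] at hbmod; simp at hbmod
      have hbo2 : (b/2 : ℂ) ≠ 0 := by simpa using hb0
      have hball : (b/2 : ℂ) ∈ ball (0:ℂ) 1 := (hmem _).2 hw0
      have hds : ‖dslope g 0 (b/2)‖ = 1/1 := by
        rw [dslope_of_ne g hbo2, slope_def_field, hg0, sub_zero, sub_zero,
          norm_div, ← hu_def, ← hs_def, hw0', h]
        norm_num
      have hmaps0 : MapsTo g (ball (0:ℂ) 1) (ball (g 0) 1) := by rwa [hg0]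
      have heqOn := Complex.affine_of_mapsTo_ball_of_norm_dslope_eq_div
        hgd (hmaps0.mono_right ball_subset_closedBall) hball hds
      set C := dslope g 0 (b/2) with hC
      have hCnorm : ‖C‖ = 1 := by
        rw [hds]; norm_num
      have hCne : C ≠ 0 := by
        intro h0; rw [h0] at hCnorm; simp at hCnorm
      have hfeq : EqOn (fun z : ℂ => mob (f 0) (z * C)) f (ball (0:ℂ) 1) := by
        intro z hz
        have hz' := (hmem _).1 hz
        have h7 := heqOn hz
        simp only [hg0, zero_add, sub_zero, smul_eq_mul] at h7
        have h8 : mob (f 0) (g z) = f z := mob_invol hc0 (hb z hz')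
        simp only [← h8, h7]
      have hmapsC : MapsTo (fun z:ℂ => z * C) (ball (0:ℂ) 1) (ball (0:ℂ) 1) := fun z hz => by
        rw [mem_ball_zero_iff] at hz ⊢
        rw [norm_mul, hCnorm, mul_one]; exact hz
      have hmapsC' : MapsTo (fun z:ℂ => z * C⁻¹) (ball (0:ℂ) 1) (ball (0:ℂ) 1) := fun z hz => by
        rw [mem_ball_zero_iff] at hz ⊢
        rw [norm_mul, norm_inv, hCnorm, inv_one, mul_one]; exact hz
      have hrot : BijOn (fun z : ℂ => z * C) (ball (0:ℂ) 1) (ball (0:ℂ) 1) := by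
        refine Set.InvOn.bijOn ⟨?_, ?_⟩ hmapsC hmapsC' <;> intro z hz <;>
          field_simp
      have hbij := (mob_bijOn hc0).comp hrot
      rw [hDball]
      refine Set.BijOn.congr ?_ hfeq
      exact hbij
  -- now the strict inequality
  set q : ℝ → ℝ := fun r => (2*r-1)/(2-r) with hq_def
  set hh : ℂ → ℂ := fun ζ => mob u (g (mob (b/2) ζ)) with hh_def
  have hhd : DifferentiableOn ℂ hh (ball (0:ℂ) 1) := by
    have h5 := ((mob_diffOn hu1).comp
      (hgd.comp (mob_diffOn hw0) (mob_mapsTo hw0))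
      ((hgmaps.comp (mob_mapsTo hw0))))
    exact h5
  have hhmaps : MapsTo hh (ball (0:ℂ) 1) (ball (0:ℂ) 1) := fun z hz => by
    rw [hh_def]
    exact (mob_mapsTo hu1) (hgmaps ((mob_mapsTo hw0) hz))
  have hh0 : hh 0 = 0 := by
    rw [hh_def]; simp only [mob_at_zero, ← hu_def, mob_zero]
  have hSch : ∀ z : ℂ, ‖z‖ < 1 → ‖hh z‖ ≤ ‖z‖ := fun z hz =>
    Complex.norm_le_norm_of_mapsTo_ball hhd (hhmaps.mono_right ball_subset_closedBall) hh0 hz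
  have hbb : (starRingEnd ℂ) b * b = 1 := by
    rw [mul_comm, Complex.mul_conj, Complex.normSq_eq_norm_sq, hbmod]
    norm_num
  set L' : ℝ := (1-a^2)*(1-s'^2)*(3*(1+1))/((1+a)^2*(1+s'*1)^2*(2-1)^2*(1+1)) with hL'_def
  have h1s : (0:ℝ) < 1 + s' := by linarith
  have strict_lb : L' ≤ ‖fb'‖ := by
    apply aux_lb f b fb' hbmod hfb hderiv
      (fun r => (1-a^2)*(1-s'^2)*(3*(1+r))
        /((1+a)^2*(1+s'*q r)^2*(2-r)^2*(1+‖f ((r:ℂ)*b)‖)))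
    · filter_upwards [Ioo_mem_nhdsLT_of_mem (by norm_num : (1:ℝ) ∈ Set.Ioc (1/2) 1)] with r hr
      have hrabs : ‖(r:ℂ)*b‖ = r := by
        rw [norm_mul, Complex.norm_real, Real.norm_eq_abs, hbmod, mul_one,
          abs_of_pos (by linarith [hr.1] : (0:ℝ) < r)]
      have hzr : ‖(r:ℂ)*b‖ < 1 := by rw [hrabs]; exact hr.2
      set t := ‖f ((r:ℂ)*b)‖ with ht_def
      have ht1 : t < 1 := hb _ hzr
      have ht0 : 0 ≤ t := norm_nonneg _
      have hkey := key _ hzr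
      set G := ‖g ((r:ℂ)*b)‖ with hG_def
      have hG1 : G < 1 := mob_abs_lt hc0 (hb _ hzr)
      have hG0 : 0 ≤ G := norm_nonneg _
      set ζ := mob (b/2) ((r:ℂ)*b) with hζ_def
      have hζabs : ‖ζ‖ = q r := by
        have hnum : (b/2 - (r:ℂ)*b) = ((1/2 - r:ℝ):ℂ)*b := by push_cast; ring
        have hconj : (starRingEnd ℂ) (b/2) * ((r:ℂ)*b) = ((r/2:ℝ):ℂ) := by
          rw [map_div₀]
          push_cast
          have h2c : (starRingEnd ℂ) (2:ℂ) = 2 := by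
            rw [show ((2:ℂ)) = ((2:ℝ):ℂ) by norm_num, Complex.conj_ofReal]
          rw [h2c]
          linear_combination ((r:ℂ)/2) * hbb
        have hden : (1:ℂ) - (starRingEnd ℂ) (b/2) * ((r:ℂ)*b) = ((1 - r/2:ℝ):ℂ) := by
          rw [hconj]; push_cast; ring
        rw [hζ_def, mob, norm_div, hnum, hden, norm_mul, Complex.norm_real, Real.norm_eq_abs,
          Complex.norm_real, Real.norm_eq_abs, hbmod, mul_one, hq_def]
        rw [abs_of_neg (by linarith [hr.1] : (1/2 - r:ℝ) < 0),
          abs_of_pos (by linarith [hr.2] : (0:ℝ) < 1 - r/2)]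
        rw [div_eq_div_iff (by linarith [hr.2]) (by linarith [hr.2])]
        ring
      have hq0 : 0 ≤ q r := by
        rw [hq_def]
        exact div_nonneg (by linarith [hr.1]) (by linarith [hr.2])
      have hq1 : q r < 1 := by
        rw [hq_def]
        rw [div_lt_one (by linarith [hr.2])]; linarith [hr.2]
      have hζ1 : ‖ζ‖ < 1 := by rw [hζabs]; exact hq1
      set H := ‖hh ζ‖ with hH_def
      have hH0 : 0 ≤ H := norm_nonneg _
      have hHle : H ≤ q r := by
        have h5 := hSch ζ hζ1; rwa [hζabs] at h5
      have hH1 : H < 1 := lt_of_le_of_lt hHle hq1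
      have hrel : mob u (hh ζ) = g ((r:ℂ)*b) := by
        have h9 : mob (b/2) ζ = (r:ℂ)*b := mob_invol hw0 hzr
        have h10 : hh ζ = mob u (g ((r:ℂ)*b)) := by rw [hh_def]; simp only [h9]
        rw [h10]
        exact mob_invol hu1 (mob_abs_lt hc0 (hb _ hzr))
      set A2 := ‖1 - (starRingEnd ℂ) u * hh ζ‖ with hA2_def
      have hA2ne := mob_denom hu1 hH1
      have hA2pos : 0 < A2 := by simpa [hA2_def, norm_pos_iff] using hA2ne
      have e2 : (1 - G^2) * A2^2 = (1-s'^2)*(1-H^2) := by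
        have hmsq := mob_sq hA2ne
        rw [hrel] at hmsq
        rw [← hG_def] at hmsq
        rw [← hs_def, ← hH_def, ← hA2_def] at hmsq
        rw [hmsq]; field_simp
      have hA2le : A2 ≤ 1 + s'*H := by
        have hstep : A2 ≤ 1 + ‖(starRingEnd ℂ) u * hh ζ‖ := by
          simpa [hA2_def] using
            norm_sub_le (1:ℂ) ((starRingEnd ℂ) u * hh ζ)
        have hmul : ‖(starRingEnd ℂ) u * hh ζ‖ = s'*H := by
          rw [norm_mul, Complex.norm_conj, ← hs_def, ← hH_def]
        linarith [hmul ▸ hstep]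
      have m := mono_aux hs0 hH0 hHle hq1.le
      have step1 : (1-s'^2)*(1-H^2) ≤ (1-G^2)*(1+s'*H)^2 := by
        rw [← e2]
        have h11 : A2^2 ≤ (1+s'*H)^2 := pow_le_pow_left₀ hA2pos.le hA2le 2
        exact mul_le_mul_of_nonneg_left h11 (by nlinarith only [hG0, hG1] : (0:ℝ) ≤ 1-G^2)
      have hpH : (0:ℝ) < (1+s'*H)^2 := by
        have h13 : (0:ℝ) < 1 + s'*H := by linarith only [mul_nonneg hs0 hH0]
        positivity
      have step2 : (1-s'^2)*(1-(q r)^2) ≤ (1-G^2)*(1+s'*(q r))^2 := by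
        have h12 : ((1-s'^2)*(1-(q r)^2))*(1+s'*H)^2 ≤ ((1-G^2)*(1+s'*(q r))^2)*(1+s'*H)^2 := by
          have hm1 := mul_le_mul_of_nonneg_left m
            (by nlinarith only [hs0, hs_le] : (0:ℝ) ≤ 1-s'^2)
          have hm2 := mul_le_mul_of_nonneg_right step1 (sq_nonneg (1+s'*(q r)))
          linarith only [hm1, hm2]
        exact le_of_mul_le_mul_right h12 hpH
      have hcl2 : (1-a^2)*((1-s'^2)*(1-(q r)^2)) ≤ (1-t^2)*((1+a)^2*(1+s'*(q r))^2) := by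
        have hm3 := mul_le_mul_of_nonneg_left step2
          (by nlinarith only [ha0, ha1] : (0:ℝ) ≤ 1-a^2)
        have hm4 := mul_le_mul_of_nonneg_right hkey (sq_nonneg (1+s'*(q r)))
        rw [← ht_def] at hm4
        linarith only [hm3, hm4]
      have hqid : (1-(q r)^2)*(2-r)^2 = 3*(1-r^2) := by
        have h2r : (2:ℝ) - r ≠ 0 := by linarith [hr.2]
        rw [hq_def]
        field_simp [h2r]
        ring
      have hqid' : (1-a^2)*(1-s'^2)*((1-(q r)^2)*(2-r)^2)
          = (1-a^2)*(1-s'^2)*(3*(1-r^2)) := by rw [hqid]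
      have hposq : (0:ℝ) < 1 + s'*(q r) := by linarith only [mul_nonneg hs0 hq0]
      have h2rpos : (0:ℝ) < 2 - r := by linarith [hr.2]
      have hDpos : (0:ℝ) < (1+a)^2*(1+s'*q r)^2*(2-r)^2*(1+t) :=
        mul_pos (mul_pos (mul_pos (pow_pos h1a 2) (pow_pos hposq 2))
          (pow_pos h2rpos 2)) (by linarith only [ht0] : (0:ℝ) < 1+t)
      rw [div_le_div_iff₀ hDpos (by linarith [hr.2] : (0:ℝ) < 1 - r)]
      have e3 : (1-a^2)*(1-s'^2)*(3*(1+r))*(1-r)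
          = (1-a^2)*((1-s'^2)*(1-(q r)^2))*(2-r)^2 := by
        linear_combination (-((1-a^2)*(1-s'^2))) * hqid
      have e4 : (1-t)*((1+a)^2*(1+s'*q r)^2*(2-r)^2*(1+t))
          = ((1-t^2)*((1+a)^2*(1+s'*(q r))^2))*(2-r)^2 := by ring
      have hm5 := mul_le_mul_of_nonneg_right hcl2 (sq_nonneg (2-r))
      linarith only [hm5, e3, e4]
    · have hqt : Tendsto q (nhdsWithin (1:ℝ) (Set.Iio 1)) (nhds 1) := by
        have hn : Tendsto (fun r:ℝ => 2*r-1) (nhdsWithin (1:ℝ) (Set.Iio 1)) (nhds 1) := by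
          have h5 := (hr1.const_mul (2:ℝ)).sub_const 1
          norm_num at h5; exact h5
        have hd : Tendsto (fun r:ℝ => 2-r) (nhdsWithin (1:ℝ) (Set.Iio 1)) (nhds 1) := by
          have h5 := tendsto_const_nhds.sub hr1 (f := fun _:ℝ => (2:ℝ))
          norm_num at h5; exact h5
        have h6 := hn.div hd one_ne_zero
        norm_num at h6
        exact h6
      have hnum : Tendsto (fun r:ℝ => (1-a^2)*(1-s'^2)*(3*(1+r)))
          (nhdsWithin (1:ℝ) (Set.Iio 1)) (nhds ((1-a^2)*(1-s'^2)*(3*(1+1)))) :=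
        tendsto_const_nhds.mul (tendsto_const_nhds.mul (tendsto_const_nhds.add hr1))
      have hden : Tendsto
          (fun r:ℝ => (1+a)^2*(1+s'*q r)^2*(2-r)^2*(1+‖f ((r:ℂ)*b)‖))
          (nhdsWithin (1:ℝ) (Set.Iio 1))
          (nhds ((1+a)^2*(1+s'*1)^2*(2-1)^2*(1+1))) := by
        refine Tendsto.mul (Tendsto.mul (Tendsto.mul tendsto_const_nhds ?_) ?_)
          (tendsto_const_nhds.add htt)
        · exact (tendsto_const_nhds.add (tendsto_const_nhds.mul hqt)).pow 2
        · exact (tendsto_const_nhds.sub hr1).pow 2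
      have hne0 : ((1+a)^2*(1+s'*1)^2*(2-1)^2*(1+1) : ℝ) ≠ 0 := by
        have : (0:ℝ) < 1 + s'*1 := by linarith
        positivity
      exact hnum.div hden hne0
  have hfinal : (1-a)/(1+a) < L' := by
    have hpos : 0 < (1-a)/(1+a) := div_pos (by linarith) h1a
    have hgt1 : 1 < 3*(1-s')/(1+s') := by
      rw [lt_div_iff₀ h1s]; linarith
    have heq : ((1-a)/(1+a)) * (3*(1-s')/(1+s')) = L' := by
      rw [hL'_def]
      field_simp
      ring
    calc (1-a)/(1+a) = ((1-a)/(1+a)) * 1 := by ring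
      _ < ((1-a)/(1+a)) * (3*(1-s')/(1+s')) := by
          exact mul_lt_mul_of_pos_left hgt1 hpos
      _ = L' := heq
  linarith [strict_lb, hfinal]
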